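/- For n ≥ 2, the number of matchings of [2n] minimally containing the pattern 1212 satisfies the recurrence |μ_n(1212)| = Σ_{k=0}^{n-2} [ (2k+1)·C_k·C_{n-k-2} + C_k·|μ_{n-k-1}(1212)| ], where C_m is the m-th Catalan number. -/

import Mathlib

/-- A (perfect) matching on `Fin m`: a fixed-point-free involution. -/
def IsMatching {m : ℕ} (f : Fin m → Fin m) : Prop :=
  Function.Involutive f ∧ ∀ i, f i ≠ i

/-- The pattern `σ` occurs in `τ`. -/
def Occurs {m M : ℕ} (σ : Fin m → Fin m) (τ : Fin M → Fin M) : Prop :=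
  ∃ g : Fin m → Fin M, StrictMono g ∧ ∀ p, τ (g p) = g (σ p)

def Avoids {m M : ℕ} (σ : Fin m → Fin m) (τ : Fin M → Fin M) : Prop :=
  ¬ Occurs σ τ

def juxt {m M : ℕ} (σ : Fin m → Fin m) (τ : Fin M → Fin M) :
    Fin (m + M) → Fin (m + M) :=
  fun i => finSumFinEquiv (Sum.map σ τ (finSumFinEquiv.symm i))

def liftMatching {m : ℕ} (σ : Fin m → Fin m) : Fin (m + 2) → Fin (m + 2) := fun i =>
  if _ : i.val = 0 then ⟨m + 1, by omega⟩
  else if _ : i.val = m + 1 then ⟨0, by omega⟩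
  else ⟨(σ ⟨i.val - 1, by have := i.isLt; omega⟩).val + 1, by
    have := (σ ⟨i.val - 1, by have := i.isLt; omega⟩).isLt; omega⟩

/-- `τ` contains `σ`, but deleting the rightmost edge of `τ` (the edge containing the
last vertex) destroys every occurrence of `σ`. -/
def MinContains {m M : ℕ} (σ : Fin m → Fin m) (τ : Fin M → Fin M) : Prop :=
  Occurs σ τ ∧ ¬ ∃ g : Fin m → Fin M, StrictMono g ∧ (∀ p, τ (g p) = g (σ p)) ∧
    ∀ p, (g p : ℕ) ≠ M - 1 ∧ (τ (g p) : ℕ) ≠ M - 1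

def ConnectedMatching {m : ℕ} (f : Fin m → Fin m) : Prop :=
  0 < m ∧ ¬ ∃ h : ℕ, 0 < h ∧ h < m ∧ ∀ i : Fin m, ((i : ℕ) < h ↔ ((f i : ℕ) < h))

def HasCrossing {m : ℕ} (f : Fin m → Fin m) : Prop :=
  ∃ a b : Fin m, a < b ∧ b < f a ∧ f a < f b

def p1122 : Fin 4 → Fin 4 := ![1, 0, 3, 2]
def p1212 : Fin 4 → Fin 4 := ![2, 3, 0, 1]
def p1221 : Fin 4 → Fin 4 := ![3, 2, 1, 0]


lemma occurs_iff {M : ℕ} (f : Fin M → Fin M) (hf : Function.Involutive f) :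
    Occurs p1212 f ↔ HasCrossing f := by
  constructor
  · rintro ⟨g, hg, hgf⟩
    refine ⟨g 0, g 1, hg (by decide), ?_, ?_⟩
    · have := hgf 0; rw [show p1212 0 = 2 by rfl] at this
      rw [this]; exact hg (by decide)
    · have h0 := hgf 0; have h1 := hgf 1
      rw [show p1212 0 = 2 by rfl] at h0; rw [show p1212 1 = 3 by rfl] at h1
      rw [h0, h1]; exact hg (by decide)
  · rintro ⟨a, b, h1, h2, h3⟩
    refine ⟨![a, b, f a, f b], ?_, ?_⟩
    · intro i j hij
      fin_cases i <;> fin_cases j <;> simp_all <;> omega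
    · intro p
      fin_cases p <;> simp [p1212, hf a, hf b]

lemma minContains_iff {M : ℕ} (f : Fin M → Fin M) (hf : Function.Involutive f) :
    MinContains p1212 f ↔
      HasCrossing f ∧ ∀ a b : Fin M, a < b → b < f a → f a < f b → (f b : ℕ) = M - 1 := by
  constructor
  · rintro ⟨ho, hno⟩
    refine ⟨(occurs_iff f hf).1 ho, ?_⟩
    intro a b h1 h2 h3
    by_contra hne
    apply hno
    refine ⟨![a, b, f a, f b], ?_, ?_, ?_⟩
    · intro i j hij; fin_cases i <;> fin_cases j <;> simp_all <;> omega
    · intro p; fin_cases p <;> simp [p1212, hf a, hf b]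
    · have hfb : (f b : ℕ) < M - 1 := by
        have := (f b).isLt; omega
      intro p
      have hmem : (![a, b, f a, f b] p : ℕ) ≤ (f b : ℕ) := by
        fin_cases p <;> simp <;> omega
      constructor
      · omega
      · have : f (![a, b, f a, f b] p) = ![a, b, f a, f b] (p1212 p) := by
          fin_cases p <;> simp [p1212, hf a, hf b]
        rw [this]
        have : (![a, b, f a, f b] (p1212 p) : ℕ) ≤ (f b : ℕ) := by
          fin_cases p <;> simp [p1212] <;> omega
        omega
  · rintro ⟨hc, hall⟩
    refine ⟨(occurs_iff f hf).2 hc, ?_⟩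
    rintro ⟨g, hg, hgf, havoid⟩
    have h1 : g 0 < g 1 := hg (by decide)
    have h2 : g 1 < g 2 := hg (by decide)
    have h3 : g 2 < g 3 := hg (by decide)
    have e0 : f (g 0) = g 2 := by have := hgf 0; rwa [show p1212 0 = 2 by rfl] at this
    have e1 : f (g 1) = g 3 := by have := hgf 1; rwa [show p1212 1 = 3 by rfl] at this
    have := hall (g 0) (g 1) h1 (by rw [e0]; exact h2) (by rw [e0, e1]; exact h3)
    rw [e1] at this
    exact (havoid 3).1 (by rw [← this])

lemma even_card_invol {α : Type*} [DecidableEq α] :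
    ∀ (s : Finset α) (f : α → α), (∀ x ∈ s, f x ∈ s) → (∀ x ∈ s, f (f x) = x) →
      (∀ x ∈ s, f x ≠ x) → Even s.card := by
  intro s
  induction s using Finset.strongInduction with
  | _ s ih =>
    intro f hmem hinv hne
    rcases s.eq_empty_or_nonempty with rfl | ⟨x, hx⟩
    · simp
    · have hfx : f x ∈ s := hmem x hx
      have hxne : f x ≠ x := hne x hx
      set t := s \ {x, f x} with ht
      have hsub : t ⊂ s := by
        refine Finset.ssubset_iff_of_subset (Finset.sdiff_subset) |>.2 ⟨x, hx, by simp [ht]⟩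
      have hss : ({x, f x} : Finset α) ⊆ s := by
        intro y hy; simp at hy; rcases hy with rfl | rfl <;> assumption
      have h2 : ({x, f x} : Finset α).card = 2 := Finset.card_pair (Ne.symm hxne)
      have hcard : s.card = t.card + 2 := by
        rw [ht, Finset.card_sdiff_of_subset hss, h2]
        have := Finset.card_le_card hss
        omega
      have het : Even t.card := by
        apply ih t hsub f
        · intro y hy
          simp only [ht, Finset.mem_sdiff, Finset.mem_insert, Finset.mem_singleton] at hy ⊢
          obtain ⟨hys, hy1⟩ := hy
          push_neg at hy1
          refine ⟨hmem y hys, ?_⟩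
          push_neg
          exact ⟨fun h => hy1.2 (by rw [← hinv y hys, h]),
            fun h => hy1.1 (by rw [← hinv y hys, h, hinv x hx])⟩
        · intro y hy; exact hinv y (Finset.mem_sdiff.1 hy).1
        · intro y hy; exact hne y (Finset.mem_sdiff.1 hy).1
      rw [hcard]
      exact het.add even_two

def DeepGap {N : ℕ} (f : Fin N → Fin N) (p : ℕ) : Prop :=
  ∃ a : Fin N, (a : ℕ) < p ∧ p ≤ (f a : ℕ)

def restr {N : ℕ} (f : Fin N → Fin N) (a b : ℕ) : Fin b → Fin b := fun x =>
  ⟨(if h : a + (x : ℕ) < N then (f ⟨a + x, h⟩ : ℕ) - a else 0) % b,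
   Nat.mod_lt _ x.pos⟩

def glue (i : ℕ) {m : ℕ} (σ : Fin (2*i) → Fin (2*i)) (τ : Fin (2*(m-i)) → Fin (2*(m-i))) :
    Fin (2*(m+1)) → Fin (2*(m+1)) := fun x =>
  ⟨(if _ : (x:ℕ) = 0 then 2*i+1
    else if _ : (x:ℕ) = 2*i+1 then 0
    else if h : (x:ℕ) < 2*i+1 then ((σ ⟨(x:ℕ)-1, by omega⟩ : ℕ) + 1)
    else if h2 : (x:ℕ) - (2*i+2) < 2*(m-i) then ((τ ⟨(x:ℕ)-(2*i+2), h2⟩ : ℕ) + (2*i+2))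
    else 0) % (2*(m+1)), Nat.mod_lt _ x.pos⟩

section GlueLemmas

variable {i m : ℕ} (σ : Fin (2*i) → Fin (2*i)) (τ : Fin (2*(m-i)) → Fin (2*(m-i)))

lemma glue_val0 (hi : i ≤ m) (x : Fin (2*(m+1))) (hx : (x:ℕ) = 0) :
    (glue i σ τ x : ℕ) = 2*i+1 := by
  simp only [glue, hx, dif_pos]
  exact Nat.mod_eq_of_lt (by omega)

lemma glue_val_arch (x : Fin (2*(m+1))) (hx : (x:ℕ) = 2*i+1) :
    (glue i σ τ x : ℕ) = 0 := by
  simp only [glue, hx]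
  rw [dif_neg (by omega : ¬(2*i+1 = 0))]
  simp

lemma glue_val_in (hi : i ≤ m) (x : Fin (2*(m+1))) (hx0 : 0 < (x:ℕ)) (hx : (x:ℕ) < 2*i+1) :
    (glue i σ τ x : ℕ) = (σ ⟨(x:ℕ)-1, by omega⟩ : ℕ) + 1 := by
  simp only [glue]
  rw [dif_neg (by omega), dif_neg (by omega), dif_pos hx]
  have := (σ ⟨(x:ℕ)-1, by omega⟩).isLt
  exact Nat.mod_eq_of_lt (by omega)

lemma glue_val_out (hi : i ≤ m) (x : Fin (2*(m+1))) (hx : 2*i+1 < (x:ℕ)) :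
    (glue i σ τ x : ℕ) =
      (τ ⟨(x:ℕ)-(2*i+2), by have := x.isLt; omega⟩ : ℕ) + (2*i+2) := by
  have hb : (x:ℕ) - (2*i+2) < 2*(m-i) := by have := x.isLt; omega
  simp only [glue]
  rw [dif_neg (by omega), dif_neg (by omega), dif_neg (by omega), dif_pos hb]
  have := (τ ⟨(x:ℕ)-(2*i+2), hb⟩).isLt
  exact Nat.mod_eq_of_lt (by omega)

lemma glue_matching (hi : i ≤ m) (hσ : IsMatching σ) (hτ : IsMatching τ) :
    IsMatching (glue i σ τ) := by
  constructor
  · intro x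
    rcases Nat.lt_trichotomy (x:ℕ) (2*i+1) with hx | hx | hx
    · rcases Nat.eq_zero_or_pos (x:ℕ) with hx0 | hx0
      · have h1 : (glue i σ τ x : ℕ) = 2*i+1 := glue_val0 σ τ hi x hx0
        have h2 : (glue i σ τ (glue i σ τ x) : ℕ) = 0 := glue_val_arch σ τ _ h1
        exact Fin.ext (by omega)
      · have h1 : (glue i σ τ x : ℕ) = (σ ⟨(x:ℕ)-1, by omega⟩ : ℕ) + 1 :=
          glue_val_in σ τ hi x hx0 hx
        have hb := (σ ⟨(x:ℕ)-1, by omega⟩).isLt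
        have h2 : (glue i σ τ (glue i σ τ x) : ℕ) =
            (σ ⟨(glue i σ τ x : ℕ)-1, by omega⟩ : ℕ) + 1 :=
          glue_val_in σ τ hi _ (by omega) (by omega)
        have hidx : (⟨(glue i σ τ x : ℕ)-1, by omega⟩ : Fin (2*i)) = σ ⟨(x:ℕ)-1, by omega⟩ :=
          Fin.ext (by simp [h1])
        apply Fin.ext
        rw [h2, hidx, hσ.1]
        simp; omega
    · have h1 : (glue i σ τ x : ℕ) = 0 := glue_val_arch σ τ x hx
      have h2 : (glue i σ τ (glue i σ τ x) : ℕ) = 2*i+1 := glue_val0 σ τ hi _ h1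
      exact Fin.ext (by omega)
    · have h1 : (glue i σ τ x : ℕ) =
          (τ ⟨(x:ℕ)-(2*i+2), by have := x.isLt; omega⟩ : ℕ) + (2*i+2) :=
        glue_val_out σ τ hi x hx
      have hb := (τ ⟨(x:ℕ)-(2*i+2), by have := x.isLt; omega⟩).isLt
      have h2 : (glue i σ τ (glue i σ τ x) : ℕ) =
          (τ ⟨(glue i σ τ x : ℕ)-(2*i+2), by have := (glue i σ τ x).isLt; omega⟩ : ℕ) + (2*i+2) :=
        glue_val_out σ τ hi _ (by omega)
      have hidx : (⟨(glue i σ τ x : ℕ)-(2*i+2), by have := (glue i σ τ x).isLt; omega⟩ : Fin (2*(m-i)))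
          = τ ⟨(x:ℕ)-(2*i+2), by have := x.isLt; omega⟩ := Fin.ext (by simp [h1])
      apply Fin.ext
      rw [h2, hidx, hτ.1]
      simp; have := x.isLt; omega
  · intro x hfix
    have hv := congrArg Fin.val hfix
    rcases Nat.lt_trichotomy (x:ℕ) (2*i+1) with hx | hx | hx
    · rcases Nat.eq_zero_or_pos (x:ℕ) with hx0 | hx0
      · rw [glue_val0 σ τ hi x hx0] at hv; omega
      · rw [glue_val_in σ τ hi x hx0 hx] at hv
        exact hσ.2 ⟨(x:ℕ)-1, by omega⟩ (Fin.ext (by simp; omega))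
    · rw [glue_val_arch σ τ x hx] at hv; omega
    · rw [glue_val_out σ τ hi x hx] at hv
      exact hτ.2 ⟨(x:ℕ)-(2*i+2), by have := x.isLt; omega⟩ (Fin.ext (by simp; omega))

lemma glue_nocross (hi : i ≤ m) (hσ : ¬ HasCrossing σ) (hτ : ¬ HasCrossing τ) :
    ¬ HasCrossing (glue i σ τ) := by
  rintro ⟨a, b, hab, hbfa, hfafb⟩
  rw [Fin.lt_def] at hab hbfa hfafb
  rcases Nat.lt_trichotomy (a:ℕ) (2*i+1) with ha | ha | ha
  · rcases Nat.eq_zero_or_pos (a:ℕ) with ha0 | ha0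
    · -- a = 0 : f a = 2i+1, b inside, f b ≤ 2i : contradiction
      rw [glue_val0 σ τ hi a ha0] at hbfa hfafb
      have hb1 : 0 < (b:ℕ) := by omega
      rw [glue_val_in σ τ hi b hb1 hbfa] at hfafb
      have := (σ ⟨(b:ℕ)-1, by omega⟩).isLt
      omega
    · rw [glue_val_in σ τ hi a ha0 ha] at hbfa hfafb
      have hsa := (σ ⟨(a:ℕ)-1, by omega⟩).isLt
      have hb1 : 0 < (b:ℕ) := by omega
      have hb2 : (b:ℕ) < 2*i+1 := by omega
      rw [glue_val_in σ τ hi b hb1 hb2] at hfafb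
      exact hσ ⟨⟨(a:ℕ)-1, by omega⟩, ⟨(b:ℕ)-1, by omega⟩, by
        rw [Fin.lt_def]; simp; omega, by rw [Fin.lt_def]; simp; omega,
        by rw [Fin.lt_def]; omega⟩
  · rw [glue_val_arch σ τ a ha] at hbfa; omega
  · rw [glue_val_out σ τ hi a ha] at hbfa hfafb
    have hta := (τ ⟨(a:ℕ)-(2*i+2), by have := a.isLt; omega⟩).isLt
    have hb : 2*i+1 < (b:ℕ) := by omega
    rw [glue_val_out σ τ hi b hb] at hfafb
    exact hτ ⟨⟨(a:ℕ)-(2*i+2), by have := a.isLt; omega⟩,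
      ⟨(b:ℕ)-(2*i+2), by have := b.isLt; omega⟩, by
        rw [Fin.lt_def]; simp; omega, by rw [Fin.lt_def]; simp; omega,
        by rw [Fin.lt_def]; omega⟩

lemma glue_deep_in (hi : i ≤ m) (p : ℕ) (hp1 : 1 ≤ p) (hp2 : p ≤ 2*i+1) :
    DeepGap (glue i σ τ) p := by
  refine ⟨⟨0, by omega⟩, by show (0:ℕ) < p; omega, ?_⟩
  rw [glue_val0 σ τ hi _ rfl]; omega

lemma glue_deep_out (hi : i ≤ m) (p : ℕ) (hp : 2*i+2 ≤ p) :
    DeepGap (glue i σ τ) p ↔ DeepGap τ (p - (2*i+2)) := by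
  constructor
  · rintro ⟨a, ha1, ha2⟩
    rcases Nat.lt_trichotomy (a:ℕ) (2*i+1) with ha | ha | ha
    · rcases Nat.eq_zero_or_pos (a:ℕ) with ha0 | ha0
      · rw [glue_val0 σ τ hi a ha0] at ha2; omega
      · rw [glue_val_in σ τ hi a ha0 ha] at ha2
        have := (σ ⟨(a:ℕ)-1, by omega⟩).isLt; omega
    · rw [glue_val_arch σ τ a ha] at ha2; omega
    · rw [glue_val_out σ τ hi a ha] at ha2
      exact ⟨⟨(a:ℕ)-(2*i+2), by have := a.isLt; omega⟩, by simp; omega, by simp; omega⟩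
  · rintro ⟨a, ha1, ha2⟩
    have hb := a.isLt
    refine ⟨⟨(a:ℕ) + (2*i+2), by omega⟩, by simp; omega, ?_⟩
    rw [glue_val_out σ τ hi _ (by simp; omega)]
    have hidx : (⟨((⟨(a:ℕ) + (2*i+2), by omega⟩ : Fin (2*(m+1))):ℕ)-(2*i+2), by simp⟩ : Fin (2*(m-i)))
        = a := Fin.ext (by simp)
    rw [hidx]; omega

end GlueLemmas

section Closure

variable {N : ℕ} {f : Fin N → Fin N}

lemma inj_of_invol (hf : Function.Involutive f) {x y : Fin N} (h : f x = f y) : x = y := by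
  have := congrArg f h; rwa [hf, hf] at this

lemma closure_in (hf : IsMatching f) (hnc : ¬ HasCrossing f) (x : Fin N)
    (h0 : 0 < N) (hx0 : 0 < (x:ℕ)) (hx : (x:ℕ) < (f ⟨0, h0⟩ : ℕ)) :
    0 < (f x : ℕ) ∧ (f x : ℕ) < (f ⟨0, h0⟩ : ℕ) := by
  have hne1 : f x ≠ f ⟨0, h0⟩ := fun h => by
    have := inj_of_invol hf.1 h; rw [this] at hx0; simp at hx0
  have hne2 : (f x : ℕ) ≠ 0 := by
    intro h
    have : f x = ⟨0, h0⟩ := Fin.ext h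
    have := congrArg f this
    rw [hf.1] at this
    rw [this] at hx; omega
  have hne3 : ¬ ((f ⟨0, h0⟩ : ℕ) < (f x : ℕ)) := by
    intro hlt
    exact hnc ⟨⟨0, h0⟩, x, by rwa [Fin.lt_def], by rwa [Fin.lt_def], by rwa [Fin.lt_def]⟩
  have : (f x : ℕ) ≠ (f ⟨0, h0⟩ : ℕ) := fun h => hne1 (Fin.ext h)
  omega

lemma f0_odd {m : ℕ} {f : Fin (2*(m+1)) → Fin (2*(m+1))} (hf : IsMatching f)
    (hnc : ¬ HasCrossing f) : ∃ i, i ≤ m ∧ (f 0 : ℕ) = 2*i+1 := by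
  have h0 : 0 < 2*(m+1) := by omega
  have hz : (0 : Fin (2*(m+1))) = ⟨0, h0⟩ := rfl
  set j := (f 0 : ℕ) with hj
  have hj0 : j ≠ 0 := by
    intro h
    exact hf.2 0 (Fin.ext (by rw [← hj, h]; rfl))
  have hjlt : j < 2*(m+1) := (f 0).isLt
  have heven : Even (Finset.Ioo (0 : Fin (2*(m+1))) (f 0)).card := by
    apply even_card_invol _ f
    · intro x hx
      simp only [Finset.mem_Ioo] at hx ⊢
      rw [Fin.lt_def, Fin.lt_def] at hx
      have := closure_in hf hnc x h0 (by simpa using hx.1) (by rw [← hz]; exact hx.2)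
      rw [← hz] at this
      exact ⟨by rw [Fin.lt_def]; simpa using this.1, by rw [Fin.lt_def]; exact this.2⟩
    · intro x _; exact hf.1 x
    · intro x _; exact hf.2 x
  rw [Fin.card_Ioo] at heven
  simp only [Fin.val_zero] at heven
  obtain ⟨c, hc⟩ := heven
  exact ⟨c, by omega, by omega⟩

lemma closure_out {m : ℕ} {f : Fin (2*(m+1)) → Fin (2*(m+1))} (hf : IsMatching f)
    (hnc : ¬ HasCrossing f) {i : ℕ} (hj : (f 0 : ℕ) = 2*i+1) (x : Fin (2*(m+1)))
    (hx : 2*i+1 < (x:ℕ)) : 2*i+1 < (f x : ℕ) := by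
  have h0 : 0 < 2*(m+1) := by omega
  have hz : (0 : Fin (2*(m+1))) = ⟨0, h0⟩ := rfl
  by_contra hle
  push_neg at hle
  have hne1 : (f x : ℕ) ≠ 2*i+1 := by
    intro h
    have : f x = f 0 := Fin.ext (by rw [h, hj])
    have := inj_of_invol hf.1 this
    rw [this] at hx; simp at hx
  have hne2 : (f x : ℕ) ≠ 0 := by
    intro h
    have : f x = ⟨0, h0⟩ := Fin.ext h
    have := congrArg f this
    rw [hf.1, ← hz] at this
    rw [this] at hx; omega
  have hcl := closure_in hf hnc (f x) h0 (by omega) (by rw [← hz, hj]; omega)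
  rw [← hz, hf.1] at hcl
  rw [hj] at hcl
  omega

end Closure

section Restr

variable {m i : ℕ} {f : Fin (2*(m+1)) → Fin (2*(m+1))}

lemma restr_val {N b : ℕ} (f : Fin N → Fin N) (a : ℕ) (x : Fin b) (h1 : a + (x:ℕ) < N)
    (h2 : a ≤ (f ⟨a + x, h1⟩ : ℕ)) (h3 : (f ⟨a + x, h1⟩ : ℕ) < a + b) :
    (restr f a b x : ℕ) = (f ⟨a + x, h1⟩ : ℕ) - a := by
  simp only [restr, dif_pos h1]
  exact Nat.mod_eq_of_lt (by omega)

lemma closure_in' (hf : IsMatching f) (hnc : ¬ HasCrossing f)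
    (h0 : (f 0 : ℕ) = 2*i+1) (v : ℕ) (h1 : 0 < v) (h2 : v < 2*i+1) (hv : v < 2*(m+1)) :
    0 < (f ⟨v, hv⟩ : ℕ) ∧ (f ⟨v, hv⟩ : ℕ) < 2*i+1 := by
  have hz : (0 : Fin (2*(m+1))) = ⟨0, by omega⟩ := rfl
  have := closure_in hf hnc ⟨v, hv⟩ (by omega) h1 (by rw [← hz, h0]; exact h2)
  rwa [← hz, h0] at this

lemma closure_out' (hf : IsMatching f) (hnc : ¬ HasCrossing f)
    (h0 : (f 0 : ℕ) = 2*i+1) (v : ℕ) (h2 : 2*i+1 < v) (hv : v < 2*(m+1)) :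
    2*i+1 < (f ⟨v, hv⟩ : ℕ) :=
  closure_out hf hnc h0 ⟨v, hv⟩ h2

lemma r1_val (hf : IsMatching f) (hnc : ¬ HasCrossing f) (hi : i ≤ m)
    (h0 : (f 0 : ℕ) = 2*i+1) (x : Fin (2*i)) (hx1 : 1 + (x:ℕ) < 2*(m+1)) :
    (restr f 1 (2*i) x : ℕ) + 1 = (f ⟨1+(x:ℕ), hx1⟩ : ℕ) ∧
      0 < (f ⟨1+(x:ℕ), hx1⟩ : ℕ) ∧ (f ⟨1+(x:ℕ), hx1⟩ : ℕ) < 2*i+1 := by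
  have hb := x.isLt
  have hcl := closure_in' hf hnc h0 (1+(x:ℕ)) (by omega) (by omega) hx1
  refine ⟨?_, hcl.1, hcl.2⟩
  rw [restr_val f 1 x hx1 (by omega) (by omega)]
  omega

lemma r2_val (hf : IsMatching f) (hnc : ¬ HasCrossing f) (hi : i ≤ m)
    (h0 : (f 0 : ℕ) = 2*i+1) (x : Fin (2*(m-i))) (hx1 : 2*i+2 + (x:ℕ) < 2*(m+1)) :
    (restr f (2*i+2) (2*(m-i)) x : ℕ) + (2*i+2) = (f ⟨2*i+2+(x:ℕ), hx1⟩ : ℕ) ∧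
      2*i+1 < (f ⟨2*i+2+(x:ℕ), hx1⟩ : ℕ) := by
  have hb := x.isLt
  have hcl := closure_out' hf hnc h0 (2*i+2+(x:ℕ)) (by omega) hx1
  have hlt := (f ⟨2*i+2+(x:ℕ), hx1⟩).isLt
  refine ⟨?_, hcl⟩
  rw [restr_val f (2*i+2) x hx1 (by omega) (by omega)]
  omega

lemma restr1_matching (hf : IsMatching f) (hnc : ¬ HasCrossing f) (hi : i ≤ m)
    (h0 : (f 0 : ℕ) = 2*i+1) : IsMatching (restr f 1 (2*i)) := by
  constructor
  · intro x
    have hb := x.isLt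
    have hx1 : 1 + (x:ℕ) < 2*(m+1) := by omega
    obtain ⟨hv, hp, hlt⟩ := r1_val hf hnc hi h0 x hx1
    set w := (restr f 1 (2*i) x : ℕ) with hw
    have hwb := (restr f 1 (2*i) x).isLt
    have hx2 : 1 + w < 2*(m+1) := by omega
    obtain ⟨hv2, hp2, hlt2⟩ := r1_val hf hnc hi h0 (restr f 1 (2*i) x) hx2
    have hidx : (⟨1 + w, hx2⟩ : Fin (2*(m+1))) = f ⟨1+(x:ℕ), hx1⟩ := Fin.ext (by simp; omega)
    rw [hidx, hf.1] at hv2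
    apply Fin.ext
    simp at hv2 ⊢
    omega
  · intro x hfix
    have hb := x.isLt
    have hx1 : 1 + (x:ℕ) < 2*(m+1) := by omega
    obtain ⟨hv, hp, hlt⟩ := r1_val hf hnc hi h0 x hx1
    have := congrArg Fin.val hfix
    apply hf.2 ⟨1+(x:ℕ), hx1⟩
    apply Fin.ext
    simp at this ⊢
    omega

lemma restr1_nocross (hf : IsMatching f) (hnc : ¬ HasCrossing f) (hi : i ≤ m)
    (h0 : (f 0 : ℕ) = 2*i+1) : ¬ HasCrossing (restr f 1 (2*i)) := by
  rintro ⟨a, b, hab, hbfa, hfafb⟩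
  rw [Fin.lt_def] at hab hbfa hfafb
  have hba := a.isLt; have hbb := b.isLt
  have ha1 : 1 + (a:ℕ) < 2*(m+1) := by omega
  have hb1 : 1 + (b:ℕ) < 2*(m+1) := by omega
  obtain ⟨hva, _, _⟩ := r1_val hf hnc hi h0 a ha1
  obtain ⟨hvb, _, _⟩ := r1_val hf hnc hi h0 b hb1
  exact hnc ⟨⟨1+(a:ℕ), ha1⟩, ⟨1+(b:ℕ), hb1⟩, by rw [Fin.lt_def]; simp; omega,
    by rw [Fin.lt_def]; simp; omega, by rw [Fin.lt_def]; omega⟩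

lemma restr2_matching (hf : IsMatching f) (hnc : ¬ HasCrossing f) (hi : i ≤ m)
    (h0 : (f 0 : ℕ) = 2*i+1) : IsMatching (restr f (2*i+2) (2*(m-i))) := by
  constructor
  · intro x
    have hb := x.isLt
    have hx1 : 2*i+2 + (x:ℕ) < 2*(m+1) := by omega
    obtain ⟨hv, hgt⟩ := r2_val hf hnc hi h0 x hx1
    set w := (restr f (2*i+2) (2*(m-i)) x : ℕ) with hw
    have hwb := (restr f (2*i+2) (2*(m-i)) x).isLt
    have hx2 : 2*i+2 + w < 2*(m+1) := by omega
    obtain ⟨hv2, hgt2⟩ := r2_val hf hnc hi h0 (restr f (2*i+2) (2*(m-i)) x) hx2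
    have hidx : (⟨2*i+2 + w, hx2⟩ : Fin (2*(m+1))) = f ⟨2*i+2+(x:ℕ), hx1⟩ :=
      Fin.ext (by simp; omega)
    rw [hidx, hf.1] at hv2
    apply Fin.ext
    simp at hv2 ⊢
    omega
  · intro x hfix
    have hb := x.isLt
    have hx1 : 2*i+2 + (x:ℕ) < 2*(m+1) := by omega
    obtain ⟨hv, hgt⟩ := r2_val hf hnc hi h0 x hx1
    have := congrArg Fin.val hfix
    apply hf.2 ⟨2*i+2+(x:ℕ), hx1⟩
    apply Fin.ext
    simp at this ⊢
    omega

lemma restr2_nocross (hf : IsMatching f) (hnc : ¬ HasCrossing f) (hi : i ≤ m)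
    (h0 : (f 0 : ℕ) = 2*i+1) : ¬ HasCrossing (restr f (2*i+2) (2*(m-i))) := by
  rintro ⟨a, b, hab, hbfa, hfafb⟩
  rw [Fin.lt_def] at hab hbfa hfafb
  have hba := a.isLt; have hbb := b.isLt
  have ha1 : 2*i+2 + (a:ℕ) < 2*(m+1) := by omega
  have hb1 : 2*i+2 + (b:ℕ) < 2*(m+1) := by omega
  obtain ⟨hva, _⟩ := r2_val hf hnc hi h0 a ha1
  obtain ⟨hvb, _⟩ := r2_val hf hnc hi h0 b hb1
  exact hnc ⟨⟨2*i+2+(a:ℕ), ha1⟩, ⟨2*i+2+(b:ℕ), hb1⟩, by rw [Fin.lt_def]; simp; omega,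
    by rw [Fin.lt_def]; simp; omega, by rw [Fin.lt_def]; omega⟩

lemma glue_restr (hf : IsMatching f) (hnc : ¬ HasCrossing f) (hi : i ≤ m)
    (h0 : (f 0 : ℕ) = 2*i+1) :
    glue i (restr f 1 (2*i)) (restr f (2*i+2) (2*(m-i))) = f := by
  funext x
  apply Fin.ext
  rcases Nat.lt_trichotomy (x:ℕ) (2*i+1) with hx | hx | hx
  · rcases Nat.eq_zero_or_pos (x:ℕ) with hx0 | hx0
    · rw [glue_val0 _ _ hi x hx0]
      have : x = 0 := Fin.ext (by simpa using hx0)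
      rw [this, h0]
    · rw [glue_val_in _ _ hi x hx0 hx]
      have hx1 : 1 + (((⟨(x:ℕ)-1, by omega⟩ : Fin (2*i))):ℕ) < 2*(m+1) := by
        simp; have := x.isLt; omega
      obtain ⟨hv, _, _⟩ := r1_val hf hnc hi h0 ⟨(x:ℕ)-1, by omega⟩ hx1
      rw [hv]
      have he : (⟨1 + (((⟨(x:ℕ)-1, by omega⟩ : Fin (2*i))):ℕ), hx1⟩ : Fin (2*(m+1))) = x :=
        Fin.ext (by simp; omega)
      rw [he]
  · rw [glue_val_arch _ _ x hx]
    have hxf : x = f 0 := Fin.ext (by rw [h0]; exact hx)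
    rw [hxf, hf.1]
    rfl
  · rw [glue_val_out _ _ hi x hx]
    have hb := x.isLt
    have hx1 : 2*i+2 + (((⟨(x:ℕ)-(2*i+2), by omega⟩ : Fin (2*(m-i)))):ℕ) < 2*(m+1) := by
      simp; omega
    obtain ⟨hv, _⟩ := r2_val hf hnc hi h0 ⟨(x:ℕ)-(2*i+2), by omega⟩ hx1
    rw [hv]
    have he : (⟨2*i+2 + (((⟨(x:ℕ)-(2*i+2), by omega⟩ : Fin (2*(m-i)))):ℕ), hx1⟩ : Fin (2*(m+1))) = x :=
      Fin.ext (by simp; omega)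
    rw [he]

end Restr

section NCMSec

def NCM (m : ℕ) := {f : Fin (2*m) → Fin (2*m) // IsMatching f ∧ ¬ HasCrossing f}

instance NCM.finite (m : ℕ) : Finite (NCM m) := by unfold NCM; exact Subtype.finite

def idx {m : ℕ} (x : NCM (m+1)) : Fin (m+1) :=
  ⟨((x.1 0 : ℕ) - 1)/2, by have := (x.1 0).isLt; omega⟩

lemma f0_val {m : ℕ} (x : NCM (m+1)) {i : Fin (m+1)} (h : idx x = i) :
    (x.1 0 : ℕ) = 2*(i:ℕ)+1 := by
  obtain ⟨j, hj, hval⟩ := f0_odd x.2.1 x.2.2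
  have := congrArg Fin.val h
  simp [idx] at this
  omega

lemma restr1_glue {i m : ℕ} (hi : i ≤ m) (σ : Fin (2*i) → Fin (2*i))
    (τ : Fin (2*(m-i)) → Fin (2*(m-i))) : restr (glue i σ τ) 1 (2*i) = σ := by
  funext x
  have hb := x.isLt
  have hx1 : 1 + (x:ℕ) < 2*(m+1) := by omega
  have hgv := glue_val_in σ τ hi ⟨1+(x:ℕ), hx1⟩ (by simp) (by simp; omega)
  have key : (⟨((⟨1+(x:ℕ), hx1⟩ : Fin (2*(m+1))) : ℕ) - 1, by simp⟩ : Fin (2*i)) = x :=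
    Fin.ext (by simp)
  rw [key] at hgv
  have hσb := (σ x).isLt
  apply Fin.ext
  rw [restr_val _ 1 x hx1 (by rw [hgv]; omega) (by rw [hgv]; omega), hgv]
  omega

lemma restr2_glue {i m : ℕ} (hi : i ≤ m) (σ : Fin (2*i) → Fin (2*i))
    (τ : Fin (2*(m-i)) → Fin (2*(m-i))) : restr (glue i σ τ) (2*i+2) (2*(m-i)) = τ := by
  funext x
  have hb := x.isLt
  have hx1 : 2*i+2 + (x:ℕ) < 2*(m+1) := by omega
  have hgv := glue_val_out σ τ hi ⟨2*i+2+(x:ℕ), hx1⟩ (by simp; omega)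
  have key : (⟨((⟨2*i+2+(x:ℕ), hx1⟩ : Fin (2*(m+1))) : ℕ) - (2*i+2), by simp⟩ : Fin (2*(m-i))) = x :=
    Fin.ext (by simp)
  rw [key] at hgv
  have hτb := (τ x).isLt
  apply Fin.ext
  rw [restr_val _ (2*i+2) x hx1 (by rw [hgv]; omega) (by rw [hgv]; omega), hgv]
  omega

lemma glue_val_zero {i m : ℕ} (hi : i ≤ m) (σ : Fin (2*i) → Fin (2*i))
    (τ : Fin (2*(m-i)) → Fin (2*(m-i))) : (glue i σ τ 0 : ℕ) = 2*i+1 :=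
  glue_val0 σ τ hi 0 rfl

def fibEquiv {m : ℕ} (i : Fin (m+1)) :
    {x : NCM (m+1) // idx x = i} ≃ NCM (i:ℕ) × NCM (m - (i:ℕ)) where
  toFun x :=
    (⟨restr x.1.1 1 (2*(i:ℕ)),
      restr1_matching x.1.2.1 x.1.2.2 (by have := i.isLt; omega) (f0_val x.1 x.2),
      restr1_nocross x.1.2.1 x.1.2.2 (by have := i.isLt; omega) (f0_val x.1 x.2)⟩,
     ⟨restr x.1.1 (2*(i:ℕ)+2) (2*(m-(i:ℕ))),
      restr2_matching x.1.2.1 x.1.2.2 (by have := i.isLt; omega) (f0_val x.1 x.2),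
      restr2_nocross x.1.2.1 x.1.2.2 (by have := i.isLt; omega) (f0_val x.1 x.2)⟩)
  invFun y :=
    ⟨⟨glue (i:ℕ) y.1.1 y.2.1,
      glue_matching _ _ (by have := i.isLt; omega) y.1.2.1 y.2.2.1,
      glue_nocross _ _ (by have := i.isLt; omega) y.1.2.2 y.2.2.2⟩,
     by
      apply Fin.ext
      simp only [idx]
      rw [glue_val_zero (by have := i.isLt; omega) y.1.1 y.2.1]
      omega⟩
  left_inv x := by
    apply Subtype.ext
    apply Subtype.ext
    exact glue_restr x.1.2.1 x.1.2.2 (by have := i.isLt; omega) (f0_val x.1 x.2)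
  right_inv y := by
    apply Prod.ext
    · exact Subtype.ext (restr1_glue (by have := i.isLt; omega) y.1.1 y.2.1)
    · exact Subtype.ext (restr2_glue (by have := i.isLt; omega) y.1.1 y.2.1)

lemma natCard_sigma {k : ℕ} (β : Fin k → Type*) [∀ i, Finite (β i)] :
    Nat.card ((i : Fin k) × β i) = ∑ i, Nat.card (β i) := by
  letI : ∀ i, Fintype (β i) := fun i => Fintype.ofFinite _
  simp [Nat.card_eq_fintype_card, Fintype.card_sigma]

lemma card_fibers {α : Type*} [Finite α] {k : ℕ} (v : α → Fin k) :
    Nat.card α = ∑ i : Fin k, Nat.card {x // v x = i} := by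
  rw [← Nat.card_congr (Equiv.sigmaFiberEquiv v)]
  exact natCard_sigma _

lemma card_NCM : ∀ m, Nat.card (NCM m) = catalan m := by
  intro m
  induction m using Nat.strong_induction_on with
  | _ m ih =>
    match m, ih with
    | 0, _ =>
      haveI : Unique (NCM 0) :=
        { default := ⟨fun x => x,
            ⟨fun x => absurd x.isLt (by omega), fun x => absurd x.isLt (by omega)⟩,
            fun ⟨a, _, _⟩ => absurd a.isLt (by omega)⟩,
          uniq := fun a => by
            apply Subtype.ext; funext x; exact absurd x.isLt (by omega) }
      rw [Nat.card_unique, catalan_zero]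
    | (m+1), ih =>
      rw [card_fibers (idx (m := m)), catalan_succ]
      apply Finset.sum_congr rfl
      intro i _
      rw [Nat.card_congr (fibEquiv i), Nat.card_prod,
        ih i (by have := i.isLt; omega), ih (m - (i:ℕ)) (by omega)]

end NCMSec

section DMSec

def DM (m : ℕ) := {x : (Fin (2*m) → Fin (2*m)) × Fin (2*m+1) //
  IsMatching x.1 ∧ ¬ HasCrossing x.1 ∧ DeepGap x.1 (x.2 : ℕ)}

instance DM.finite (m : ℕ) : Finite (DM m) := by unfold DM; exact Subtype.finite

lemma DeepGap.pos {N : ℕ} {f : Fin N → Fin N} {p : ℕ} (h : DeepGap f p) : 1 ≤ p := by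
  obtain ⟨a, h1, _⟩ := h; omega

lemma card_DM_zero : Nat.card (DM 0) = 0 := by
  haveI : IsEmpty (DM 0) := ⟨fun x => by
    obtain ⟨a, _, _⟩ := x.2.2.2; exact absurd a.isLt (by omega)⟩
  exact Nat.card_of_isEmpty

def idxD {m : ℕ} (x : DM (m+1)) : Fin (m+1) :=
  ⟨((x.1.1 0 : ℕ) - 1)/2, by have := (x.1.1 0).isLt; omega⟩

lemma f0_valD {m : ℕ} (x : DM (m+1)) {i : Fin (m+1)} (h : idxD x = i) :
    (x.1.1 0 : ℕ) = 2*(i:ℕ)+1 := by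
  obtain ⟨j, hj, hval⟩ := f0_odd x.2.1 x.2.2.1
  have := congrArg Fin.val h
  simp [idxD] at this
  omega

lemma deep_restr2 {m i : ℕ} {f : Fin (2*(m+1)) → Fin (2*(m+1))} (hm : IsMatching f)
    (hnc : ¬ HasCrossing f) (hi : i ≤ m) (h0 : (f 0 : ℕ) = 2*i+1) {p : ℕ}
    (hp : 2*i+2 ≤ p) (hd : DeepGap f p) :
    DeepGap (restr f (2*i+2) (2*(m-i))) (p - (2*i+2)) := by
  rw [← glue_restr hm hnc hi h0] at hd
  exact (glue_deep_out _ _ hi p hp).1 hd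

def fibDEquiv {m : ℕ} (i : Fin (m+1)) :
    {x : DM (m+1) // idxD x = i} ≃
      ((NCM (i:ℕ) × Fin (2*(i:ℕ)+1)) × NCM (m - (i:ℕ))) ⊕ (NCM (i:ℕ) × DM (m - (i:ℕ))) where
  toFun x :=
    if h : (x.1.1.2 : ℕ) ≤ 2*(i:ℕ)+1 then
      Sum.inl ((⟨restr x.1.1.1 1 (2*(i:ℕ)),
          restr1_matching x.1.2.1 x.1.2.2.1 (by have := i.isLt; omega) (f0_valD x.1 x.2),
          restr1_nocross x.1.2.1 x.1.2.2.1 (by have := i.isLt; omega) (f0_valD x.1 x.2)⟩,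
        ⟨(x.1.1.2 : ℕ) - 1, by omega⟩),
       ⟨restr x.1.1.1 (2*(i:ℕ)+2) (2*(m-(i:ℕ))),
          restr2_matching x.1.2.1 x.1.2.2.1 (by have := i.isLt; omega) (f0_valD x.1 x.2),
          restr2_nocross x.1.2.1 x.1.2.2.1 (by have := i.isLt; omega) (f0_valD x.1 x.2)⟩)
    else
      Sum.inr (⟨restr x.1.1.1 1 (2*(i:ℕ)),
          restr1_matching x.1.2.1 x.1.2.2.1 (by have := i.isLt; omega) (f0_valD x.1 x.2),
          restr1_nocross x.1.2.1 x.1.2.2.1 (by have := i.isLt; omega) (f0_valD x.1 x.2)⟩,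
        ⟨(restr x.1.1.1 (2*(i:ℕ)+2) (2*(m-(i:ℕ))),
          ⟨(x.1.1.2 : ℕ) - (2*(i:ℕ)+2), by have := x.1.1.2.isLt; omega⟩),
          restr2_matching x.1.2.1 x.1.2.2.1 (by have := i.isLt; omega) (f0_valD x.1 x.2),
          restr2_nocross x.1.2.1 x.1.2.2.1 (by have := i.isLt; omega) (f0_valD x.1 x.2),
          deep_restr2 x.1.2.1 x.1.2.2.1 (by have := i.isLt; omega) (f0_valD x.1 x.2)
           (by omega) x.1.2.2.2⟩)
  invFun y :=
    match y with
    | Sum.inl ((σ, q), τ) =>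
      ⟨⟨(glue (i:ℕ) σ.1 τ.1, ⟨(q:ℕ)+1, by have := q.isLt; have := i.isLt; omega⟩),
        glue_matching _ _ (by have := i.isLt; omega) σ.2.1 τ.2.1,
        glue_nocross _ _ (by have := i.isLt; omega) σ.2.2 τ.2.2,
        glue_deep_in σ.1 τ.1 (by have := i.isLt; omega) ((q:ℕ)+1) (by omega)
          (by have := q.isLt; omega)⟩,
       by
        apply Fin.ext
        show ((glue (i:ℕ) σ.1 τ.1 0 : ℕ) - 1)/2 = (i:ℕ)
        rw [glue_val_zero (by have := i.isLt; omega) σ.1 τ.1]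
        omega⟩
    | Sum.inr (σ, z) =>
      ⟨⟨(glue (i:ℕ) σ.1 z.1.1, ⟨(z.1.2:ℕ) + (2*(i:ℕ)+2), by have := z.1.2.isLt; have := i.isLt; omega⟩),
        glue_matching _ _ (by have := i.isLt; omega) σ.2.1 z.2.1,
        glue_nocross _ _ (by have := i.isLt; omega) σ.2.2 z.2.2.1,
        (glue_deep_out σ.1 z.1.1 (by have := i.isLt; omega) ((z.1.2:ℕ) + (2*(i:ℕ)+2)) (by omega)).2
          (by
            have hq : (z.1.2:ℕ) + (2*(i:ℕ)+2) - (2*(i:ℕ)+2) = (z.1.2:ℕ) := by omega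
            rw [hq]
            exact z.2.2.2)⟩,
       by
        apply Fin.ext
        show ((glue (i:ℕ) σ.1 z.1.1 0 : ℕ) - 1)/2 = (i:ℕ)
        rw [glue_val_zero (by have := i.isLt; omega) σ.1 z.1.1]
        omega⟩
  left_inv x := by
    have hp1 : 1 ≤ (x.1.1.2 : ℕ) := x.1.2.2.2.pos
    dsimp only
    by_cases h : (x.1.1.2 : ℕ) ≤ 2*(i:ℕ)+1
    · rw [dif_pos h]
      apply Subtype.ext
      apply Subtype.ext
      apply Prod.ext
      · exact glue_restr x.1.2.1 x.1.2.2.1 (by have := i.isLt; omega) (f0_valD x.1 x.2)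
      · exact Fin.ext (by simp; omega)
    · rw [dif_neg h]
      apply Subtype.ext
      apply Subtype.ext
      apply Prod.ext
      · exact glue_restr x.1.2.1 x.1.2.2.1 (by have := i.isLt; omega) (f0_valD x.1 x.2)
      · exact Fin.ext (by simp; omega)
  right_inv y := by
    rcases y with ⟨⟨σ, q⟩, τ⟩ | ⟨σ, z⟩ <;> dsimp only
    · rw [dif_pos (by have := q.isLt; simp; omega)]
      refine congrArg Sum.inl ?_
      refine Prod.ext (Prod.ext ?_ ?_) ?_
      · exact Subtype.ext (restr1_glue (by have := i.isLt; omega) σ.1 τ.1)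
      · exact Fin.ext (by simp)
      · exact Subtype.ext (restr2_glue (by have := i.isLt; omega) σ.1 τ.1)
    · rw [dif_neg (by simp; omega)]
      refine congrArg Sum.inr ?_
      refine Prod.ext ?_ (Subtype.ext (Prod.ext ?_ ?_))
      · exact Subtype.ext (restr1_glue (by have := i.isLt; omega) σ.1 z.1.1)
      · exact restr2_glue (by have := i.isLt; omega) σ.1 z.1.1
      · exact Fin.ext (by simp)

lemma card_DM_succ (m : ℕ) :
    Nat.card (DM (m+1)) = ∑ i : Fin (m+1),
      ((2*(i:ℕ)+1) * catalan (i:ℕ) * catalan (m-(i:ℕ)) +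
        catalan (i:ℕ) * Nat.card (DM (m-(i:ℕ)))) := by
  rw [card_fibers (idxD (m := m))]
  apply Finset.sum_congr rfl
  intro i _
  rw [Nat.card_congr (fibDEquiv i), Nat.card_sum, Nat.card_prod, Nat.card_prod,
    Nat.card_prod, card_NCM, card_NCM,
    Nat.card_eq_fintype_card (α := Fin (2*(i:ℕ)+1)), Fintype.card_fin]
  ring

end DMSec

section DelIns

variable {d : ℕ}

def del (f : Fin (2*(d+1)) → Fin (2*(d+1))) (a0 : ℕ) : Fin (2*d) → Fin (2*d) := fun x =>
  ⟨(if (f ⟨(if (x:ℕ) < a0 then (x:ℕ) else (x:ℕ)+1), by have := x.isLt; split <;> omega⟩ : ℕ) < a0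
    then (f ⟨(if (x:ℕ) < a0 then (x:ℕ) else (x:ℕ)+1), by have := x.isLt; split <;> omega⟩ : ℕ)
    else (f ⟨(if (x:ℕ) < a0 then (x:ℕ) else (x:ℕ)+1), by have := x.isLt; split <;> omega⟩ : ℕ) - 1)
      % (2*d), Nat.mod_lt _ x.pos⟩

def ins (N : Fin (2*d) → Fin (2*d)) (p : Fin (2*d+1)) : Fin (2*(d+1)) → Fin (2*(d+1)) := fun x =>
  ⟨(if _ : (x:ℕ) = 2*d+1 then (p:ℕ)
    else if _ : (x:ℕ) = (p:ℕ) then 2*d+1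
    else if h3 : (x:ℕ) < (p:ℕ) then
      (if (N ⟨(x:ℕ), by have := p.isLt; omega⟩ : ℕ) < (p:ℕ)
       then (N ⟨(x:ℕ), by have := p.isLt; omega⟩ : ℕ)
       else (N ⟨(x:ℕ), by have := p.isLt; omega⟩ : ℕ)+1)
    else
      (if (N ⟨(x:ℕ)-1, by have := x.isLt; omega⟩ : ℕ) < (p:ℕ)
       then (N ⟨(x:ℕ)-1, by have := x.isLt; omega⟩ : ℕ)
       else (N ⟨(x:ℕ)-1, by have := x.isLt; omega⟩ : ℕ)+1)) % (2*(d+1)),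
   Nat.mod_lt _ (by omega)⟩

variable {N : Fin (2*d) → Fin (2*d)} {p : Fin (2*d+1)}

lemma ins_val_last (x : Fin (2*(d+1))) (hx : (x:ℕ) = 2*d+1) : (ins N p x : ℕ) = (p:ℕ) := by
  simp only [ins]
  rw [dif_pos hx]
  exact Nat.mod_eq_of_lt (by have := p.isLt; omega)

lemma ins_val_p (x : Fin (2*(d+1))) (hx : (x:ℕ) = (p:ℕ)) : (ins N p x : ℕ) = 2*d+1 := by
  have hp := p.isLt
  simp only [ins]
  rw [dif_neg (by omega), dif_pos hx]
  exact Nat.mod_eq_of_lt (by omega)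

lemma ins_val_lt (x : Fin (2*(d+1))) (hx : (x:ℕ) < (p:ℕ)) (y : Fin (2*d)) (hy : (y:ℕ) = (x:ℕ)) :
    (ins N p x : ℕ) = if (N y:ℕ) < (p:ℕ) then (N y:ℕ) else (N y:ℕ)+1 := by
  have hp := p.isLt
  simp only [ins]
  rw [dif_neg (by omega), dif_neg (by omega), dif_pos hx]
  have hyy : (⟨(x:ℕ), by have := p.isLt; omega⟩ : Fin (2*d)) = y := Fin.ext hy.symm
  rw [hyy]
  have := (N y).isLt
  split <;> exact Nat.mod_eq_of_lt (by omega)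

lemma ins_val_gt (x : Fin (2*(d+1))) (hx1 : (p:ℕ) < (x:ℕ)) (hx2 : (x:ℕ) ≠ 2*d+1)
    (y : Fin (2*d)) (hy : (y:ℕ) = (x:ℕ)-1) :
    (ins N p x : ℕ) = if (N y:ℕ) < (p:ℕ) then (N y:ℕ) else (N y:ℕ)+1 := by
  have hp := p.isLt
  simp only [ins]
  rw [dif_neg hx2, dif_neg (by omega), dif_neg (by omega)]
  have hyy : (⟨(x:ℕ)-1, by have := x.isLt; omega⟩ : Fin (2*d)) = y := Fin.ext hy.symm
  rw [hyy]
  have := (N y).isLt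
  split <;> exact Nat.mod_eq_of_lt (by omega)

lemma del_val {f : Fin (2*(d+1)) → Fin (2*(d+1))} {a0 : ℕ} (hf : IsMatching f)
    (ha0 : (f ⟨2*d+1, by omega⟩ : ℕ) = a0) (ha : a0 ≤ 2*d) (x : Fin (2*d))
    (x' : Fin (2*(d+1))) (hx' : (x':ℕ) = if (x:ℕ) < a0 then (x:ℕ) else (x:ℕ)+1) :
    (del f a0 x : ℕ) = (if (f x' : ℕ) < a0 then (f x':ℕ) else (f x':ℕ) - 1) ∧
      (f x':ℕ) ≠ a0 ∧ (f x':ℕ) ≠ 2*d+1 := by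
  have hxb := x.isLt
  have hx'b := x'.isLt
  have hfxb := (f x').isLt
  have hne1 : (x':ℕ) ≠ a0 := by split at hx' <;> omega
  have hne2 : (x':ℕ) ≠ 2*d+1 := by split at hx' <;> omega
  have hfne2 : (f x':ℕ) ≠ 2*d+1 := by
    intro h
    have h1 : f x' = ⟨2*d+1, by omega⟩ := Fin.ext h
    have := congrArg f h1
    rw [hf.1] at this
    apply hne1
    rw [this, ha0]
  have hfne1 : (f x':ℕ) ≠ a0 := by
    intro h
    have h1 : f x' = f ⟨2*d+1, by omega⟩ := Fin.ext (by rw [h, ha0])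
    have := inj_of_invol hf.1 h1
    exact hne2 (by rw [this])
  refine ⟨?_, hfne1, hfne2⟩
  simp only [del]
  have hmk : (⟨(if (x:ℕ) < a0 then (x:ℕ) else (x:ℕ)+1), by have := x.isLt; split <;> omega⟩ :
      Fin (2*(d+1))) = x' := Fin.ext hx'.symm
  rw [hmk]
  split <;> exact Nat.mod_eq_of_lt (by omega)

lemma del_matching {f : Fin (2*(d+1)) → Fin (2*(d+1))} {a0 : ℕ} (hf : IsMatching f)
    (ha0 : (f ⟨2*d+1, by omega⟩ : ℕ) = a0) (ha : a0 ≤ 2*d) : IsMatching (del f a0) := by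
  have emb : ∀ x : Fin (2*d), ∃ x' : Fin (2*(d+1)),
      (x':ℕ) = if (x:ℕ) < a0 then (x:ℕ) else (x:ℕ)+1 :=
    fun x => ⟨⟨if (x:ℕ) < a0 then (x:ℕ) else (x:ℕ)+1, by have := x.isLt; split <;> omega⟩, rfl⟩
  constructor
  · intro x
    obtain ⟨x', hx'⟩ := emb x
    obtain ⟨hv, hne1, hne2⟩ := del_val hf ha0 ha x x' hx'
    obtain ⟨w', hw'⟩ := emb (del f a0 x)
    obtain ⟨hv2, _, _⟩ := del_val hf ha0 ha (del f a0 x) w' hw'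
    have hfxb := (f x').isLt
    have hww : w' = f x' := Fin.ext (by rw [hw', hv]; split <;> (try split) <;> omega)
    rw [hww, hf.1] at hv2
    apply Fin.ext
    rw [hv2, hx']
    have := x.isLt
    split <;> (try split) <;> omega
  · intro x hfix
    obtain ⟨x', hx'⟩ := emb x
    obtain ⟨hv, hne1, hne2⟩ := del_val hf ha0 ha x x' hx'
    have hvv := congrArg Fin.val hfix
    rw [hv] at hvv
    apply hf.2 x'
    apply Fin.ext
    have hxb := x.isLt
    split at hvv <;> ((try split at hx') <;> omega)

lemma del_nocross {f : Fin (2*(d+1)) → Fin (2*(d+1))} {a0 : ℕ} (hf : IsMatching f)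
    (ha0 : (f ⟨2*d+1, by omega⟩ : ℕ) = a0) (ha : a0 ≤ 2*d)
    (hall : ∀ a b : Fin (2*(d+1)), a < b → b < f a → f a < f b → (f b : ℕ) = 2*d+1) :
    ¬ HasCrossing (del f a0) := by
  rintro ⟨a, b, hab, hbfa, hfafb⟩
  rw [Fin.lt_def] at hab hbfa hfafb
  obtain ⟨a', ha'⟩ : ∃ x' : Fin (2*(d+1)), (x':ℕ) = if (a:ℕ) < a0 then (a:ℕ) else (a:ℕ)+1 :=
    ⟨⟨if (a:ℕ) < a0 then (a:ℕ) else (a:ℕ)+1, by have := a.isLt; split <;> omega⟩, rfl⟩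
  obtain ⟨b', hb'⟩ : ∃ x' : Fin (2*(d+1)), (x':ℕ) = if (b:ℕ) < a0 then (b:ℕ) else (b:ℕ)+1 :=
    ⟨⟨if (b:ℕ) < a0 then (b:ℕ) else (b:ℕ)+1, by have := b.isLt; split <;> omega⟩, rfl⟩
  obtain ⟨hva, hnea1, hnea2⟩ := del_val hf ha0 ha a a' ha'
  obtain ⟨hvb, hneb1, hneb2⟩ := del_val hf ha0 ha b b' hb'
  have hfab := (f a').isLt
  have hfbb := (f b').isLt
  have hcross : a' < b' ∧ b' < f a' ∧ f a' < f b' := by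
    refine ⟨?_, ?_, ?_⟩ <;> rw [Fin.lt_def]
    · rw [ha', hb']; split <;> (try split) <;> omega
    · rw [hb']; rw [hva] at hbfa; split at hbfa <;> ((try split) <;> omega)
    · rw [hva] at hfafb; rw [hvb] at hfafb
      split at hfafb <;> ((try split at hfafb) <;> omega)
  exact hneb2 (hall a' b' hcross.1 hcross.2.1 hcross.2.2)

lemma del_deep {f : Fin (2*(d+1)) → Fin (2*(d+1))} {a0 : ℕ} (hf : IsMatching f)
    (ha0 : (f ⟨2*d+1, by omega⟩ : ℕ) = a0) (ha : a0 ≤ 2*d)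
    (hc : HasCrossing f)
    (hall : ∀ a b : Fin (2*(d+1)), a < b → b < f a → f a < f b → (f b : ℕ) = 2*d+1) :
    DeepGap (del f a0) a0 := by
  obtain ⟨a, b, hab, hbfa, hfafb⟩ := hc
  rw [Fin.lt_def] at hab hbfa hfafb
  have hfb := hall a b (by rwa [Fin.lt_def]) (by rwa [Fin.lt_def]) (by rwa [Fin.lt_def])
  -- b is the partner of the last vertex, so (b:ℕ) = a0
  have hbval : (b:ℕ) = a0 := by
    have h1 : f b = ⟨2*d+1, by omega⟩ := Fin.ext hfb
    have := congrArg f h1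
    rw [hf.1] at this
    rw [this]
    exact ha0
  have hfab := (f a).isLt
  have haval : (a:ℕ) < a0 := by omega
  have hfaval : a0 < (f a:ℕ) ∧ (f a:ℕ) < 2*d+1 := by omega
  refine ⟨⟨(a:ℕ), by omega⟩, by simp; omega, ?_⟩
  obtain ⟨a', ha'⟩ : ∃ x' : Fin (2*(d+1)),
      (x':ℕ) = if ((⟨(a:ℕ), by omega⟩ : Fin (2*d)):ℕ) < a0 then ((⟨(a:ℕ), by omega⟩ : Fin (2*d)):ℕ)
        else ((⟨(a:ℕ), by omega⟩ : Fin (2*d)):ℕ)+1 :=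
    ⟨⟨if ((⟨(a:ℕ), by omega⟩ : Fin (2*d)):ℕ) < a0 then ((⟨(a:ℕ), by omega⟩ : Fin (2*d)):ℕ)
        else ((⟨(a:ℕ), by omega⟩ : Fin (2*d)):ℕ)+1, by simp; split <;> omega⟩, rfl⟩
  obtain ⟨hv, hne1, hne2⟩ := del_val hf ha0 ha _ a' ha'
  have haa : a' = a := Fin.ext (by rw [ha']; simp; omega)
  rw [haa] at hv
  rw [hv]
  split <;> omega

end DelIns

section InsSide

variable {d : ℕ} {N : Fin (2*d) → Fin (2*d)} {p : Fin (2*d+1)}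

lemma ins_matching (hN : IsMatching N) : IsMatching (ins N p) := by
  have hp := p.isLt
  constructor
  · intro x
    have hx := x.isLt
    by_cases h1 : (x:ℕ) = 2*d+1
    · have v1 := ins_val_last (N := N) (p := p) x h1
      have v2 := ins_val_p (N := N) (p := p) (ins N p x) v1
      exact Fin.ext (by omega)
    · by_cases h2 : (x:ℕ) = (p:ℕ)
      · have v1 := ins_val_p (N := N) (p := p) x h2
        have v2 := ins_val_last (N := N) (p := p) (ins N p x) v1
        exact Fin.ext (by omega)
      · rcases Nat.lt_or_ge (x:ℕ) (p:ℕ) with h3 | h3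
        · have hxd : (x:ℕ) < 2*d := by omega
          have hyv : ((⟨(x:ℕ), hxd⟩ : Fin (2*d)):ℕ) = (x:ℕ) := rfl
          have hv := ins_val_lt (N := N) x h3 ⟨(x:ℕ), hxd⟩ hyv
          have hnyb := (N ⟨(x:ℕ), hxd⟩).isLt
          by_cases hny : (N ⟨(x:ℕ), hxd⟩:ℕ) < (p:ℕ)
          · have hv' : (ins N p x:ℕ) = (N ⟨(x:ℕ), hxd⟩:ℕ) := by rw [hv, if_pos hny]
            have h2' := ins_val_lt (N := N) (p := p) (ins N p x) (by omega) (N ⟨(x:ℕ), hxd⟩) hv'.symm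
            rw [hN.1] at h2'
            apply Fin.ext
            rw [h2']
            split <;> omega
          · have hv' : (ins N p x:ℕ) = (N ⟨(x:ℕ), hxd⟩:ℕ) + 1 := by rw [hv, if_neg hny]
            have h2' := ins_val_gt (N := N) (p := p) (ins N p x) (by omega) (by omega) (N ⟨(x:ℕ), hxd⟩) (by omega)
            rw [hN.1] at h2'
            apply Fin.ext
            rw [h2']
            split <;> omega
        · have h3' : (p:ℕ) < (x:ℕ) := by omega
          have hxd : (x:ℕ) - 1 < 2*d := by omega
          have hyv : ((⟨(x:ℕ)-1, hxd⟩ : Fin (2*d)):ℕ) = (x:ℕ)-1 := rfl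
          have hv := ins_val_gt (N := N) x h3' h1 ⟨(x:ℕ)-1, hxd⟩ hyv
          have hnyb := (N ⟨(x:ℕ)-1, hxd⟩).isLt
          by_cases hny : (N ⟨(x:ℕ)-1, hxd⟩:ℕ) < (p:ℕ)
          · have hv' : (ins N p x:ℕ) = (N ⟨(x:ℕ)-1, hxd⟩:ℕ) := by rw [hv, if_pos hny]
            have h2' := ins_val_lt (N := N) (p := p) (ins N p x) (by omega) (N ⟨(x:ℕ)-1, hxd⟩) hv'.symm
            rw [hN.1] at h2'
            apply Fin.ext
            rw [h2']
            split <;> omega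
          · have hv' : (ins N p x:ℕ) = (N ⟨(x:ℕ)-1, hxd⟩:ℕ) + 1 := by rw [hv, if_neg hny]
            have h2' := ins_val_gt (N := N) (p := p) (ins N p x) (by omega) (by omega) (N ⟨(x:ℕ)-1, hxd⟩) (by omega)
            rw [hN.1] at h2'
            apply Fin.ext
            rw [h2']
            split <;> omega
  · intro x hfix
    have hx := x.isLt
    have hvv := congrArg Fin.val hfix
    by_cases h1 : (x:ℕ) = 2*d+1
    · rw [ins_val_last x h1] at hvv; omega
    · by_cases h2 : (x:ℕ) = (p:ℕ)
      · rw [ins_val_p x h2] at hvv; omega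
      · rcases Nat.lt_or_ge (x:ℕ) (p:ℕ) with h3 | h3
        · have hxd : (x:ℕ) < 2*d := by omega
          rw [ins_val_lt x h3 ⟨(x:ℕ), hxd⟩ rfl] at hvv
          have hnyb := (N ⟨(x:ℕ), hxd⟩).isLt
          have hyv : ((⟨(x:ℕ), hxd⟩ : Fin (2*d)):ℕ) = (x:ℕ) := rfl
          apply hN.2 ⟨(x:ℕ), hxd⟩
          apply Fin.ext
          split at hvv <;> omega
        · have h3' : (p:ℕ) < (x:ℕ) := by omega
          have hxd : (x:ℕ) - 1 < 2*d := by omega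
          rw [ins_val_gt x h3' h1 ⟨(x:ℕ)-1, hxd⟩ rfl] at hvv
          have hnyb := (N ⟨(x:ℕ)-1, hxd⟩).isLt
          have hyv : ((⟨(x:ℕ)-1, hxd⟩ : Fin (2*d)):ℕ) = (x:ℕ)-1 := rfl
          apply hN.2 ⟨(x:ℕ)-1, hxd⟩
          apply Fin.ext
          split at hvv <;> omega

lemma ins_hascrossing (hd : DeepGap N (p:ℕ)) : HasCrossing (ins N p) := by
  have hp := p.isLt
  obtain ⟨a, ha1, ha2⟩ := hd
  have hab := a.isLt
  have hnab := (N a).isLt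
  refine ⟨⟨(a:ℕ), by omega⟩, ⟨(p:ℕ), by omega⟩, ?_, ?_, ?_⟩
  · exact ha1
  · show (p:ℕ) < (ins N p ⟨(a:ℕ), by omega⟩ : ℕ)
    rw [ins_val_lt ⟨(a:ℕ), by omega⟩ ha1 a rfl]
    split <;> omega
  · show (ins N p ⟨(a:ℕ), by omega⟩ : ℕ) < (ins N p ⟨(p:ℕ), by omega⟩ : ℕ)
    rw [ins_val_lt ⟨(a:ℕ), by omega⟩ ha1 a rfl, ins_val_p ⟨(p:ℕ), by omega⟩ rfl]
    split <;> omega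

lemma ins_allcross (hN : IsMatching N) (hnc : ¬ HasCrossing N)
    (a b : Fin (2*(d+1))) (hab : a < b) (hbfa : b < ins N p a) (hfafb : ins N p a < ins N p b) :
    (ins N p b : ℕ) = 2*d+1 := by
  have hp := p.isLt
  have hav := a.isLt
  have hbv := b.isLt
  rw [Fin.lt_def] at hab hbfa hfafb
  by_contra hne
  have hvab := (ins N p a).isLt
  have hvbb := (ins N p b).isLt
  have hbne : (b:ℕ) ≠ 2*d+1 := by
    intro h
    omega
  have hbnep : (b:ℕ) ≠ (p:ℕ) := by
    intro h
    rw [ins_val_p b h] at hne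
    omega
  have hanep : (a:ℕ) ≠ (p:ℕ) := by
    intro h
    rw [ins_val_p a h] at hbfa hfafb
    omega
  have hane : (a:ℕ) ≠ 2*d+1 := by omega
  obtain ⟨ya, hyv, hva⟩ : ∃ y : Fin (2*d),
      ((y:ℕ) = if (a:ℕ) < (p:ℕ) then (a:ℕ) else (a:ℕ)-1) ∧
        (ins N p a : ℕ) = if (N y:ℕ) < (p:ℕ) then (N y:ℕ) else (N y:ℕ)+1 := by
    rcases Nat.lt_or_ge (a:ℕ) (p:ℕ) with h | h
    · have hd1 : (a:ℕ) < 2*d := by omega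
      refine ⟨⟨(a:ℕ), hd1⟩, ?_, ?_⟩
      · rw [if_pos h]
      · exact ins_val_lt a h ⟨(a:ℕ), hd1⟩ rfl
    · have hd1 : (a:ℕ)-1 < 2*d := by omega
      refine ⟨⟨(a:ℕ)-1, hd1⟩, ?_, ?_⟩
      · rw [if_neg (by omega)]
      · exact ins_val_gt a (by omega) hane ⟨(a:ℕ)-1, hd1⟩ rfl
  obtain ⟨yb, hyv2, hvb⟩ : ∃ y : Fin (2*d),
      ((y:ℕ) = if (b:ℕ) < (p:ℕ) then (b:ℕ) else (b:ℕ)-1) ∧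
        (ins N p b : ℕ) = if (N y:ℕ) < (p:ℕ) then (N y:ℕ) else (N y:ℕ)+1 := by
    rcases Nat.lt_or_ge (b:ℕ) (p:ℕ) with h | h
    · have hd1 : (b:ℕ) < 2*d := by omega
      refine ⟨⟨(b:ℕ), hd1⟩, ?_, ?_⟩
      · rw [if_pos h]
      · exact ins_val_lt b h ⟨(b:ℕ), hd1⟩ rfl
    · have hd1 : (b:ℕ)-1 < 2*d := by omega
      refine ⟨⟨(b:ℕ)-1, hd1⟩, ?_, ?_⟩
      · rw [if_neg (by omega)]
      · exact ins_val_gt b (by omega) hbne ⟨(b:ℕ)-1, hd1⟩ rfl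
  have hnya := (N ya).isLt
  have hnyb := (N yb).isLt
  apply hnc
  refine ⟨ya, yb, ?_, ?_, ?_⟩ <;> rw [Fin.lt_def] <;>
    (split at hyv <;> split at hyv2 <;> split at hva <;> split at hvb <;> omega)

lemma ins_del {f : Fin (2*(d+1)) → Fin (2*(d+1))} (hf : IsMatching f)
    (hp : ((p:ℕ) : ℕ) = (f ⟨2*d+1, by omega⟩ : ℕ)) :
    ins (del f (p:ℕ)) p = f := by
  have hpb := p.isLt
  have hlastb := (f ⟨2*d+1, by omega⟩).isLt
  funext x
  apply Fin.ext
  have hx := x.isLt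
  by_cases h1 : (x:ℕ) = 2*d+1
  · rw [ins_val_last x h1]
    have hxx : x = ⟨2*d+1, by omega⟩ := Fin.ext h1
    rw [hxx, hp]
  · by_cases h2 : (x:ℕ) = (p:ℕ)
    · rw [ins_val_p x h2]
      have hxx : x = f ⟨2*d+1, by omega⟩ := Fin.ext (by omega)
      rw [hxx, hf.1]
    · rcases Nat.lt_or_ge (x:ℕ) (p:ℕ) with h3 | h3
      · have hxd : (x:ℕ) < 2*d := by omega
        rw [ins_val_lt x h3 ⟨(x:ℕ), hxd⟩ rfl]
        obtain ⟨hv, hne1, hne2⟩ := del_val hf hp.symm (by omega) ⟨(x:ℕ), hxd⟩ x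
          (by rw [if_pos]; exact h3)
        rw [hv]
        have := (f x).isLt
        split <;> (try split) <;> omega
      · have hxd : (x:ℕ) - 1 < 2*d := by omega
        have hyvv : ((⟨(x:ℕ)-1, hxd⟩ : Fin (2*d)):ℕ) = (x:ℕ)-1 := rfl
        rw [ins_val_gt x (by omega) h1 ⟨(x:ℕ)-1, hxd⟩ rfl]
        obtain ⟨hv, hne1, hne2⟩ := del_val hf hp.symm (by omega) ⟨(x:ℕ)-1, hxd⟩ x
          (by rw [hyvv, if_neg (by omega)]; omega)
        rw [hv]
        have := (f x).isLt
        split <;> (try split) <;> omega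

lemma del_ins (hN : IsMatching N) :
    del (ins N p) ((ins N p ⟨2*d+1, by omega⟩ : ℕ)) = N := by
  have hpb := p.isLt
  have hlast : (ins N p ⟨2*d+1, by omega⟩ : ℕ) = (p:ℕ) := ins_val_last _ rfl
  rw [hlast]
  have hins := ins_matching (p := p) hN
  have hlast' : ((p:ℕ) : ℕ) = (ins N p ⟨2*d+1, by omega⟩ : ℕ) := hlast.symm
  funext x
  apply Fin.ext
  have hx := x.isLt
  have hnb := (N x).isLt
  rcases Nat.lt_or_ge (x:ℕ) (p:ℕ) with h3 | h3
  · have hb2 : (x:ℕ) < 2*(d+1) := by omega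
    have hx'v : ((⟨(x:ℕ), hb2⟩ : Fin (2*(d+1))):ℕ) = (x:ℕ) := rfl
    obtain ⟨hv, hne1, hne2⟩ := del_val hins hlast'.symm (by omega) x ⟨(x:ℕ), hb2⟩
      (by rw [hx'v, if_pos h3])
    rw [hv, ins_val_lt ⟨(x:ℕ), hb2⟩ (by rw [hx'v]; omega) x hx'v.symm]
    split <;> (try split) <;> omega
  · have hb2 : (x:ℕ)+1 < 2*(d+1) := by omega
    have hx'v : ((⟨(x:ℕ)+1, hb2⟩ : Fin (2*(d+1))):ℕ) = (x:ℕ)+1 := rfl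
    obtain ⟨hv, hne1, hne2⟩ := del_val hins hlast'.symm (by omega) x ⟨(x:ℕ)+1, hb2⟩
      (by rw [hx'v, if_neg (by omega)])
    rw [hv, ins_val_gt ⟨(x:ℕ)+1, hb2⟩ (by rw [hx'v]; omega) (by rw [hx'v]; omega) x
      (by rw [hx'v]; omega)]
    split <;> (try split) <;> omega

end InsSide

section Final

def muT (n : ℕ) := {f : Fin (2*n) → Fin (2*n) // IsMatching f ∧ MinContains p1212 f}

instance muT.finite (n : ℕ) : Finite (muT n) := by unfold muT; exact Subtype.finite

lemma a0_le {d : ℕ} (f : Fin (2*(d+1)) → Fin (2*(d+1))) (hf : IsMatching f) :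
    (f ⟨2*d+1, by omega⟩ : ℕ) ≤ 2*d := by
  have h1 := (f ⟨2*d+1, by omega⟩).isLt
  have h2 := hf.2 ⟨2*d+1, by omega⟩
  have h3 : (f ⟨2*d+1, by omega⟩ : ℕ) ≠ 2*d+1 := fun h => h2 (Fin.ext h)
  omega

lemma mu_hc {d : ℕ} (x : muT (d+1)) : HasCrossing x.1 :=
  ((minContains_iff x.1 x.2.1.1).1 x.2.2).1

lemma mu_hall {d : ℕ} (x : muT (d+1)) : ∀ a b : Fin (2*(d+1)), a < b → b < x.1 a →
    x.1 a < x.1 b → (x.1 b : ℕ) = 2*d+1 := by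
  intro a b h1 h2 h3
  have := ((minContains_iff x.1 x.2.1.1).1 x.2.2).2 a b h1 h2 h3
  omega

def muEquiv (d : ℕ) : muT (d+1) ≃ DM d where
  toFun x :=
    ⟨(del x.1 ((x.1 ⟨2*d+1, by omega⟩ : ℕ)),
      ⟨(x.1 ⟨2*d+1, by omega⟩ : ℕ), by have := a0_le x.1 x.2.1; omega⟩),
     del_matching x.2.1 rfl (a0_le x.1 x.2.1),
     del_nocross x.2.1 rfl (a0_le x.1 x.2.1) (mu_hall x),
     del_deep x.2.1 rfl (a0_le x.1 x.2.1) (mu_hc x) (mu_hall x)⟩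
  invFun y :=
    ⟨ins y.1.1 y.1.2, ins_matching y.2.1,
     (minContains_iff _ (ins_matching y.2.1).1).2
       ⟨ins_hascrossing y.2.2.2,
        fun a b h1 h2 h3 => by
          have := ins_allcross y.2.1 y.2.2.1 a b h1 h2 h3
          omega⟩⟩
  left_inv x := Subtype.ext (ins_del x.2.1 rfl)
  right_inv y := by
    apply Subtype.ext
    apply Prod.ext
    · exact del_ins y.2.1
    · exact Fin.ext (ins_val_last _ rfl)

lemma card_mu_DM (j : ℕ) :
    Nat.card {f : Fin (2*(j+1)) → Fin (2*(j+1)) // IsMatching f ∧ MinContains p1212 f} =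
      Nat.card (DM j) := Nat.card_congr (muEquiv j)

end Final

open Finset in
theorem mu_1212_recurrence (n : ℕ) (hn : 2 ≤ n) :
    Nat.card {f : Fin (2 * n) → Fin (2 * n) // IsMatching f ∧ MinContains p1212 f} =
      ∑ k ∈ range (n - 1),
        ((2 * k + 1) * catalan k * catalan (n - k - 2) +
          catalan k *
            Nat.card {f : Fin (2 * (n - k - 1)) → Fin (2 * (n - k - 1)) //
              IsMatching f ∧ MinContains p1212 f}) := by
  obtain ⟨m, rfl⟩ : ∃ m, n = m + 2 := ⟨n - 2, by omega⟩
  refine Eq.trans (card_mu_DM (m+1)) ?_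
  rw [card_DM_succ m, Fin.sum_univ_eq_sum_range
    (fun k => ((2*k+1) * catalan k * catalan (m-k) + catalan k * Nat.card (DM (m-k)))) (m+1)]
  have e0 : m + 2 - 1 = m + 1 := by omega
  rw [e0]
  apply Finset.sum_congr rfl
  intro k hk
  rw [Finset.mem_range] at hk
  have e1 : m + 2 - k - 2 = m - k := by omega
  have e2 : m + 2 - k - 1 = (m - k) + 1 := by omega
  rw [e1, e2, card_mu_DM (m - k)]
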